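/- If w is a squarefree word over {A,B,C}, then P(w) is squarefree. -/

import Mathlib

inductive T where
  | A | B | C
deriving DecidableEq, Repr

open T

def P : T → List T
  | A => [A,B,C,B,A,C,B,C,A,B,C,B,A]
  | B => [B,C,A,C,B,A,C,A,B,C,A,C,B]
  | C => [C,A,B,A,C,B,A,B,C,A,B,A,C]

def Pw (w : List T) : List T := w.flatMap P

def SqFree (w : List T) : Prop := ∀ x : List T, x ≠ [] → ¬ (x ++ x) <:+: w

def rot : T → T
  | A => B
  | B => C
  | C => A

def rotw (w : List T) : List T := w.map rot

def refT : T → T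
  | A => A
  | B => C
  | C => B

def reflw (w : List T) : List T := w.map refT

def OccursAt (w v : List T) (i : ℕ) : Prop := (v.drop i).take w.length = w

/-! ### auxiliary lemmas -/

instance : Fintype T := ⟨⟨{T.A, T.B, T.C}, by decide⟩, fun x => by cases x <;> decide⟩

lemma length_P (a : T) : (P a).length = 13 := by cases a <;> rfl

lemma Pw_append (u v : List T) : Pw (u ++ v) = Pw u ++ Pw v := List.flatMap_append

lemma Pw_cons (a : T) (w : List T) : Pw (a :: w) = P a ++ Pw w := rfl

lemma length_Pw (w : List T) : (Pw w).length = 13 * w.length := by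
  induction w with
  | nil => rfl
  | cons a w ih => simp [Pw_cons, length_P, ih, List.length_cons]; ring

lemma P_inj (a b : T) (h : P a = P b) : a = b := by revert a b h; decide

lemma sync_core : ∀ (a b c : T) (q : Fin 13),
    ((P a ++ P b).drop q.val).take 13 = P c → q.val = 0 ∧ c = a := by decide

lemma suffix_det : ∀ (a b : T) (j : Fin 13), (P a).drop j.val = (P b).drop j.val → a = b := by
  decide

lemma getElem_idx_congr (w : List T) {i j : ℕ} (hij : i = j) (hi : i < w.length) :
    w[i]'hi = w[j]'(hij ▸ hi) := by subst hij; rfl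

/-- extracting a segment from an occurrence -/
lemma extract_seg {s x t l : List T} (hl : s ++ x ++ t = l) (i m : ℕ) (him : i + m ≤ x.length) :
    (l.drop (s.length + i)).take m = (x.drop i).take m := by
  have h2 : (s ++ x.take i) ++ (x.drop i ++ t) = l := by
    rw [← hl, List.append_assoc, ← List.append_assoc (x.take i), List.take_append_drop,
      List.append_assoc]
  have hd : l.drop (s.length + i) = x.drop i ++ t := by
    rw [← h2]
    apply List.drop_left'
    simp only [List.length_append, List.length_take]
    omega
  rw [hd]
  exact List.take_append_of_le_length (by simp only [List.length_drop]; omega)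

lemma seg_sq {s x t l : List T} (hl : s ++ (x ++ x) ++ t = l) (i m : ℕ) (him : i + m ≤ x.length) :
    (l.drop (s.length + i)).take m = (l.drop (s.length + x.length + i)).take m := by
  have h1 : s ++ x ++ (x ++ t) = l := by rw [← hl]; simp
  have h2 : (s ++ x) ++ x ++ t = l := by rw [← hl]; simp
  have e1 := extract_seg h1 i m him
  have e2 := extract_seg h2 i m him
  simp only [List.length_append] at e2
  exact e1.trans e2.symm

lemma block (w : List T) (i : ℕ) (hi : i < w.length) :
    ((Pw w).drop (13 * i)).take 13 = P (w[i]) := by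
  have hsplit : w.take i ++ (w[i] :: w.drop (i + 1)) = w := by
    rw [← List.drop_eq_getElem_cons hi, List.take_append_drop]
  have hPw : Pw (w.take i) ++ Pw (w[i] :: w.drop (i + 1)) = Pw w := by
    rw [← Pw_append, hsplit]
  have hd : (Pw w).drop (13 * i) = P (w[i]) ++ Pw (w.drop (i + 1)) := by
    rw [← hPw, List.drop_left' (by simp [length_Pw, List.length_take]; omega), Pw_cons]
  rw [hd]
  exact List.take_left' (length_P _)

/-- synchronization -/
lemma sync (w : List T) : ∀ (q : ℕ) (c : T), q + 13 ≤ 13 * w.length →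
    ((Pw w).drop q).take 13 = P c → q % 13 = 0 ∧ ∃ h : q / 13 < w.length, w[q / 13] = c := by
  induction w with
  | nil => intro q c hq _; simp at hq
  | cons a w ih =>
    intro q c hq hEq
    by_cases h13 : 13 ≤ q
    · have hdrop : (Pw (a :: w)).drop q = (Pw w).drop (q - 13) := by
        have h1 : (Pw (a :: w)).drop q = ((P a ++ Pw w).drop 13).drop (q - 13) := by
          rw [List.drop_drop, Pw_cons]
          congr 1
          omega
        rw [h1, List.drop_left' (length_P a)]
      rw [hdrop] at hEq
      have hq' : (q - 13) + 13 ≤ 13 * w.length := by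
        simp only [List.length_cons] at hq; omega
      obtain ⟨hmod, hlt, hget⟩ := ih (q - 13) c hq' hEq
      have hdiv : q / 13 = (q - 13) / 13 + 1 := by omega
      refine ⟨by omega, ⟨by simp only [hdiv, List.length_cons]; omega, ?_⟩⟩
      simp only [hdiv, List.getElem_cons_succ]
      exact hget
    · push_neg at h13
      cases w with
      | nil =>
        have hq0 : q = 0 := by simp at hq; omega
        subst hq0
        have hPa : Pw [a] = P a := by simp [Pw]
        rw [hPa, List.drop_zero, List.take_of_length_le (by rw [length_P])] at hEq
        refine ⟨rfl, ⟨by simp, ?_⟩⟩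
        simpa using P_inj a c hEq
      | cons b w' =>
        have h1 : Pw (a :: b :: w') = (P a ++ P b) ++ Pw w' := by
          simp [Pw_cons, List.append_assoc]
        rw [h1, List.drop_append_of_le_length (by simp [length_P]; omega),
          List.take_append_of_le_length (by simp [length_P]; omega)] at hEq
        obtain ⟨hq0, hca⟩ := sync_core a b c ⟨q, h13⟩ hEq
        simp only at hq0
        subst hq0
        refine ⟨rfl, ⟨by simp, ?_⟩⟩
        simpa using hca.symm

/-! ### squarefreeness via indices -/

lemma sq_of_idx (l : List T) (i n : ℕ) (h1 : 1 ≤ n) (h2 : i + 2 * n ≤ l.length)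
    (he : (l.drop i).take n = (l.drop (i + n)).take n) : ¬ SqFree l := by
  intro hsf
  have hxlen : ((l.drop i).take n).length = n := by
    simp only [List.length_take, List.length_drop]; omega
  have hxne : (l.drop i).take n ≠ [] := by
    rw [← List.length_pos_iff, hxlen]; omega
  apply hsf _ hxne
  refine ⟨l.take i, l.drop (i + 2 * n), ?_⟩
  have key : (l.drop i).take (2 * n) = (l.drop i).take n ++ (l.drop i).take n := by
    rw [show 2 * n = n + n by omega, List.take_add]
    congr 1
    rw [List.drop_drop]
    exact he.symm
  have hsplit : l.take i ++ ((l.drop i).take (2 * n) ++ (l.drop i).drop (2 * n)) = l := by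
    rw [List.take_append_drop, List.take_append_drop]
  conv_rhs => rw [← hsplit, key, List.drop_drop]
  exact List.append_assoc _ _ _

def noSq (l : List T) : Bool :=
  (List.range l.length).all fun i =>
    (List.range (l.length + 1)).all fun n =>
      decide (n = 0 ∨ l.length < i + 2 * n ∨ (l.drop i).take n ≠ (l.drop (i + n)).take n)

lemma noSq_of_sqFree {l : List T} (h : SqFree l) : noSq l = true := by
  unfold noSq
  simp only [List.all_eq_true, List.mem_range, decide_eq_true_eq]
  intro i hi n hn
  by_contra hcon
  push_neg at hcon
  obtain ⟨hn0, hle, heq⟩ := hcon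
  exact sq_of_idx l i n (by omega) (by omega) heq h

lemma sqFree_of_noSq {l : List T} (h : noSq l = true) : SqFree l := by
  intro x hxne hinf
  obtain ⟨s, t, hl⟩ := hinf
  have hnpos : 1 ≤ x.length := List.length_pos_iff.mpr hxne
  have hlen : s.length + 2 * x.length + t.length = l.length := by
    rw [← hl]; simp only [List.length_append]; omega
  have e1 := extract_seg (x := x ++ x) hl 0 x.length
    (by simp only [List.length_append]; omega)
  have e2 := extract_seg (x := x ++ x) hl x.length x.length
    (by simp only [List.length_append]; omega)
  simp only [Nat.add_zero, List.drop_zero] at e1 e2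
  have r1 : (x ++ x).take x.length = x := List.take_left' rfl
  have r2 : ((x ++ x).drop x.length).take x.length = x := by
    rw [List.drop_left' rfl, List.take_of_length_le le_rfl]
  rw [r1] at e1
  rw [r2] at e2
  unfold noSq at h
  simp only [List.all_eq_true, List.mem_range, decide_eq_true_eq] at h
  rcases h s.length (by omega) x.length (by omega) with h0 | hgt | hne
  · omega
  · omega
  · exact hne (e1.trans e2.symm)

def noSqB (l : List T) : Bool :=
  (List.range 13).all fun i =>
    (List.range 25).all fun n =>
      decide (n = 0 ∨ l.length < i + 2 * n ∨ (l.drop i).take n ≠ (l.drop (i + n)).take n)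

lemma no_short_sq {l : List T} (hB : noSqB l = true) {x : List T} (hne : x ≠ [])
    (hlen : x.length ≤ 24) (i : ℕ) (hi : i ≤ 12)
    (hocc : (l.drop i).take (2 * x.length) = x ++ x) : False := by
  have hnpos : 1 ≤ x.length := List.length_pos_iff.mpr hne
  have hfit : i + 2 * x.length ≤ l.length := by
    have hc := congrArg List.length hocc
    simp only [List.length_take, List.length_drop, List.length_append] at hc
    omega
  have t1 : (l.drop i).take x.length = x := by
    have e : (l.drop i).take x.length = ((l.drop i).take (2 * x.length)).take x.length := by
      rw [List.take_take]
      congr 1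
      omega
    rw [e, hocc, List.take_left' rfl]
  have t2 : (l.drop (i + x.length)).take x.length = x := by
    have e : ((l.drop i).take (2 * x.length)).drop x.length
        = (l.drop (i + x.length)).take x.length := by
      rw [List.drop_take, List.drop_drop, show 2 * x.length - x.length = x.length by omega]
    rw [← e, hocc, List.drop_left' rfl]
  unfold noSqB at hB
  simp only [List.all_eq_true, List.mem_range, decide_eq_true_eq] at hB
  rcases hB i (by omega) x.length (by omega) with h0 | hgt | hne'
  · omega
  · omega
  · exact hne' (t1.trans t2.symm)

/-! ### enumeration of short words -/

def exactW : ℕ → List (List T)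
  | 0 => [[]]
  | n + 1 => (exactW n).flatMap (fun l => [A :: l, B :: l, C :: l])

lemma mem_exactW : ∀ v : List T, v ∈ exactW v.length := by
  intro v
  induction v with
  | nil => simp [exactW]
  | cons a l ih =>
    simp only [List.length_cons, exactW, List.mem_flatMap]
    exact ⟨l, ih, by cases a <;> simp⟩

set_option maxHeartbeats 40000000 in
set_option maxRecDepth 40000 in
theorem check5 : ∀ v ∈ (List.range 6).flatMap exactW, noSq v = true → noSqB (Pw v) = true := by
  decide

/-! ### main theorem -/

theorem stmt4 (w : List T) (h : SqFree w) : SqFree (Pw w) := by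
  intro x hx hinf
  obtain ⟨s, t, hl⟩ := hinf
  have hnpos : 1 ≤ x.length := List.length_pos_iff.mpr hx
  have hLlen : (Pw w).length = 13 * w.length := length_Pw w
  have hlen : s.length + 2 * x.length + t.length = (Pw w).length := by
    rw [← hl]; simp only [List.length_append]; omega
  have seg : ∀ i m, i + m ≤ x.length →
      ((Pw w).drop (s.length + i)).take m = ((Pw w).drop (s.length + x.length + i)).take m :=
    fun i m him => seg_sq hl i m him
  by_cases hsmall : x.length ≤ 24
  · -- short squares: reduce to a factor of length ≤ 5 of w
    set a := s.length / 13 with ha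
    have haw : a < w.length := by omega
    set v := (w.drop a).take 5 with hv
    have hvinf : v <:+: w :=
      ((List.take_prefix 5 _).isInfix).trans (List.drop_suffix a w).isInfix
    have hvsf : SqFree v := fun y hy hyinf => h y hy (hyinf.trans hvinf)
    have hPdrop : Pw (w.drop a) = (Pw w).drop (13 * a) := by
      have hh : Pw (w.take a) ++ Pw (w.drop a) = Pw w := by
        rw [← Pw_append, List.take_append_drop]
      rw [← hh, List.drop_left' (by simp only [length_Pw, List.length_take]; omega)]
    have hPv : Pw v = ((Pw w).drop (13 * a)).take 65 := by
      rw [← hPdrop, hv]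
      have hsplit : Pw ((w.drop a).take 5) ++ Pw ((w.drop a).drop 5) = Pw (w.drop a) := by
        rw [← Pw_append, List.take_append_drop]
      by_cases h5 : 5 ≤ w.length - a
      · rw [← hsplit,
          List.take_left' (by simp only [length_Pw, List.length_take, List.length_drop]; omega)]
      · push_neg at h5
        rw [List.take_of_length_le (by simp only [List.length_drop]; omega),
          List.take_of_length_le
            (by simp only [length_Pw, List.length_take, List.length_drop]; omega)]
    set r := s.length - 13 * a with hr
    have hr12 : r ≤ 12 := by omega
    have hxx : ((Pw w).drop s.length).take (2 * x.length) = x ++ x := by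
      have e0 := extract_seg (x := x ++ x) hl 0 (2 * x.length)
        (by simp only [List.length_append]; omega)
      simp only [Nat.add_zero, List.drop_zero] at e0
      rw [e0, List.take_of_length_le (by simp only [List.length_append]; omega)]
    have e1 : (((Pw w).drop (13 * a)).take 65).drop r = ((Pw w).drop s.length).take (65 - r) := by
      rw [List.drop_take, List.drop_drop, show 13 * a + r = s.length by omega]
    have e2 : ((Pw v).drop r).take (2 * x.length) = x ++ x := by
      rw [hPv, e1, List.take_take, show 2 * x.length ⊓ (65 - r) = 2 * x.length by omega, hxx]
    have hvmem : v ∈ (List.range 6).flatMap exactW := by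
      have hvlen : v.length ≤ 5 := by
        rw [hv]; simp only [List.length_take, List.length_drop]; omega
      exact List.mem_flatMap.mpr ⟨v.length, List.mem_range.mpr (by omega), mem_exactW v⟩
    exact no_short_sq (check5 v hvmem (noSq_of_sqFree hvsf)) hx hsmall r hr12 e2
  · -- long squares: use synchronization
    push_neg at hsmall
    set m := (s.length + 12) / 13 with hm
    have hm1 : s.length ≤ 13 * m := by omega
    have hm2 : 13 * m + 13 ≤ s.length + x.length := by omega
    have hmw : m < w.length := by omega
    have hb : ((Pw w).drop (13 * m)).take 13 = P (w[m]) := block w m hmw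
    have hseg := seg (13 * m - s.length) 13 (by omega)
    rw [show s.length + (13 * m - s.length) = 13 * m by omega,
        show s.length + x.length + (13 * m - s.length) = 13 * m + x.length by omega] at hseg
    have hsync := sync w (13 * m + x.length) (w[m]) (by omega) (by rw [← hseg]; exact hb)
    obtain ⟨hmod, -⟩ := hsync
    have hk13 : x.length % 13 = 0 := by omega
    set k := x.length / 13 with hk
    have hnk : x.length = 13 * k := by omega
    have hk1 : 2 ≤ k := by omega
    have hblocks : ∀ i, s.length ≤ 13 * i → 13 * i + 13 ≤ s.length + x.length →
        ∀ (hi : i < w.length) (hik : i + k < w.length), w[i] = w[i + k] := by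
      intro i hpi hin hi hik
      have hb1 : ((Pw w).drop (13 * i)).take 13 = P (w[i]) := block w i hi
      have hb2 : ((Pw w).drop (13 * (i + k))).take 13 = P (w[i + k]) := block w (i + k) hik
      have hs := seg (13 * i - s.length) 13 (by omega)
      rw [show s.length + (13 * i - s.length) = 13 * i by omega,
          show s.length + x.length + (13 * i - s.length) = 13 * (i + k) by omega] at hs
      exact P_inj _ _ ((hb1.symm.trans hs).trans hb2)
    by_cases hal : s.length % 13 = 0
    · -- aligned case
      set i0 := s.length / 13 with hi0
      have hp13 : s.length = 13 * i0 := by omega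
      have hle : i0 + 2 * k ≤ w.length := by omega
      have heq : (w.drop i0).take k = (w.drop (i0 + k)).take k := by
        apply List.ext_getElem
          (by simp only [List.length_take, List.length_drop]; omega)
        intro j hj1 hj2
        have hjk : j < k := by
          simp only [List.length_take, List.length_drop] at hj1; omega
        simp only [List.getElem_take, List.getElem_drop]
        exact (hblocks (i0 + j) (by omega) (by omega) (by omega) (by omega)).trans
          (getElem_idx_congr w (by omega) (by omega))
      exact sq_of_idx w i0 k (by omega) (by omega) heq h
    · -- unaligned case
      set i0 := s.length / 13 with hi0
      have hpgt : 13 * i0 < s.length := by omega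
      have hplt : s.length < 13 * i0 + 13 := by omega
      have hle : i0 + 2 * k ≤ w.length := by omega
      set r := 13 * (i0 + 1) - s.length with hrr
      have hr1 : 1 ≤ r := by omega
      have hr12 : r ≤ 12 := by omega
      have hi0w : i0 < w.length := by omega
      have hi0kw : i0 + k < w.length := by omega
      have hbd : w[i0] = w[i0 + k] := by
        have hsr := seg 0 r (by omega)
        simp only [Nat.add_zero] at hsr
        have key : ∀ (j : ℕ) (hj : j < w.length),
            ((Pw w).drop (13 * j + 13 - r)).take r = (P (w[j]'hj)).drop (13 - r) := by
          intro j hj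
          rw [← block w j hj, List.drop_take, List.drop_drop,
              show 13 * j + (13 - r) = 13 * j + 13 - r by omega,
              show 13 - (13 - r) = r by omega]
        have k1 := key i0 hi0w
        have k2 := key (i0 + k) hi0kw
        rw [show 13 * i0 + 13 - r = s.length by omega] at k1
        rw [show 13 * (i0 + k) + 13 - r = s.length + x.length by omega] at k2
        rw [k1, k2] at hsr
        exact suffix_det _ _ ⟨13 - r, by omega⟩ hsr
      have heq : (w.drop i0).take k = (w.drop (i0 + k)).take k := by
        apply List.ext_getElem
          (by simp only [List.length_take, List.length_drop]; omega)
        intro j hj1 hj2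
        have hjk : j < k := by
          simp only [List.length_take, List.length_drop] at hj1; omega
        simp only [List.getElem_take, List.getElem_drop]
        rcases Nat.eq_zero_or_pos j with hj0 | hjpos
        · subst hj0
          exact (getElem_idx_congr w (by omega) (by omega)).trans
            (hbd.trans (getElem_idx_congr w (by omega) (by omega)))
        · exact (hblocks (i0 + j) (by omega) (by omega) (by omega) (by omega)).trans
            (getElem_idx_congr w (by omega) (by omega))
      exact sq_of_idx w i0 k (by omega) (by omega) heq h
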